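/- There is no decomposition of K_20 into edge-disjoint copies of a graph with degree sequence (5,3,3,3,3,3): equivalently, since each vertex of K_20 has degree 19 and the only partition of 19 into parts from {3,5} is 5+5+3+3+3, each of the 20 vertices would need to appear as the degree-5 vertex in exactly two of the 19 copies, requiring 40 = 2·19 degree-5 slots, a contradiction. -/
import Mathlib


open SimpleGraph

/-- `H` decomposes into edge-disjoint copies of `G`. -/
def HasDecomp {V W : Type*} (H : SimpleGraph V) (G : SimpleGraph W) : Prop :=
  ∃ parts : Set H.Subgraph,
    (∀ p ∈ parts, Nonempty (p.coe ≃g G)) ∧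
    ∀ e ∈ H.edgeSet, ∃! p, p ∈ parts ∧ e ∈ SimpleGraph.Subgraph.edgeSet p

/-- There is no decomposition of `K_20` into edge-disjoint copies of a graph
with degree sequence `(5,3,3,3,3,3)`. -/
theorem stmt_3 (G : SimpleGraph (Fin 6)) [DecidableRel G.Adj]
    (hdeg : (Finset.univ.val.map (fun x => G.degree x) : Multiset ℕ) = {5, 3, 3, 3, 3, 3}) :
    ¬ HasDecomp (⊤ : SimpleGraph (Fin 20)) G := by
  classical
  rintro ⟨parts, hiso, huniq⟩
  -- instance-free degree of a vertex in a subgraph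
  set d : (⊤ : SimpleGraph (Fin 20)).Subgraph → Fin 20 → ℕ :=
    fun p v => (p.neighborSet v).ncard with hd
  -- Facts about G
  have hGmem : ∀ x : Fin 6, G.degree x = 3 ∨ G.degree x = 5 := by
    intro x
    have hx : G.degree x ∈ (Finset.univ.val.map (fun x => G.degree x) : Multiset ℕ) :=
      Multiset.mem_map_of_mem _ (Finset.mem_univ x)
    rw [hdeg] at hx
    simp only [Multiset.insert_eq_cons, Multiset.mem_cons, Multiset.mem_singleton] at hx
    tauto
  have hGsum : ∑ x, G.degree x = 20 := by
    show (Finset.univ.val.map (fun x => G.degree x)).sum = 20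
    rw [hdeg]; rfl
  have hGedges : G.edgeFinset.card = 10 := by
    have := G.sum_degrees_eq_twice_card_edges
    omega
  have hGcount : (Finset.univ.filter (fun x => G.degree x = 5)).card = 1 := by
    have h1 : Multiset.count 5 (Finset.univ.val.map (fun x => G.degree x)) = 1 := by
      rw [hdeg]; rfl
    rw [Multiset.count_map] at h1
    have h2 : Multiset.filter (fun a => 5 = G.degree a) Finset.univ.val
        = Multiset.filter (fun a => G.degree a = 5) Finset.univ.val :=
      Multiset.filter_congr (fun x _ => by constructor <;> omega)
    rw [h2] at h1
    rw [Finset.card, Finset.filter_val]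
    exact h1
  -- degree facts about parts
  have hdeg0 : ∀ p ∈ parts, ∀ v, v ∉ p.verts → d p v = 0 := by
    intro p _ v hv
    have h0 : p.neighborSet v = ∅ := by
      ext w
      simp only [Subgraph.mem_neighborSet, Set.mem_empty_iff_false, iff_false]
      exact fun h => hv (p.edge_vert h)
    rw [hd]
    simp only [h0, Set.ncard_empty]
  have hdegv : ∀ p ∈ parts, ∀ (f : p.coe ≃g G), ∀ v (hv : v ∈ p.verts),
      d p v = G.degree (f ⟨v, hv⟩) := by
    intro p _ f v hv
    calc d p v = Nat.card (p.neighborSet v) := (Nat.card_coe_set_eq _).symm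
      _ = Nat.card (p.coe.neighborSet ⟨v, hv⟩) :=
          (Nat.card_congr (Subgraph.coeNeighborSetEquiv ⟨v, hv⟩)).symm
      _ = Nat.card (G.neighborSet (f ⟨v, hv⟩)) := Nat.card_congr (f.mapNeighborSet ⟨v, hv⟩)
      _ = G.degree (f ⟨v, hv⟩) := by
          rw [Nat.card_eq_fintype_card, card_neighborSet_eq_degree]
  have hdeg035 : ∀ p ∈ parts, ∀ v, d p v = 0 ∨ d p v = 3 ∨ d p v = 5 := by
    intro p hp v
    by_cases hv : v ∈ p.verts
    · obtain ⟨f⟩ := hiso p hp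
      rw [hdegv p hp f v hv]
      rcases hGmem (f ⟨v, hv⟩) with h | h <;> omega
    · exact Or.inl (hdeg0 p hp v hv)
  -- each part has exactly one vertex of degree 5
  have pcount : ∀ p ∈ parts,
      (Finset.univ.filter (fun v : Fin 20 => d p v = 5)).card = 1 := by
    intro p hp
    obtain ⟨f⟩ := hiso p hp
    rw [← hGcount]
    have hmem : ∀ v : Fin 20, d p v = 5 → v ∈ p.verts := by
      intro v h
      by_contra hv
      rw [hdeg0 p hp v hv] at h
      exact absurd h (by norm_num)
    apply Finset.card_bij (i := fun v hv => f ⟨v, hmem v (Finset.mem_filter.mp hv).2⟩)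
    · intro v hv
      have h5 := (Finset.mem_filter.mp hv).2
      refine Finset.mem_filter.mpr ⟨Finset.mem_univ _, ?_⟩
      rw [← hdegv p hp f v (hmem v h5)]
      exact h5
    · intro v1 hv1 v2 hv2 h
      exact Subtype.ext_iff.mp (f.injective h)
    · intro x hx
      have hx5 := (Finset.mem_filter.mp hx).2
      have hv : ((f.symm x : p.verts) : Fin 20) ∈ p.verts := (f.symm x).2
      have hdeg5 : d p ((f.symm x : p.verts) : Fin 20) = 5 := by
        rw [hdegv p hp f _ hv]
        have h2 : (⟨((f.symm x : p.verts) : Fin 20), hv⟩ : p.verts) = f.symm x :=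
          Subtype.ext rfl
        rw [h2, RelIso.apply_symm_apply]
        exact hx5
      refine ⟨_, Finset.mem_filter.mpr ⟨Finset.mem_univ _, hdeg5⟩, ?_⟩
      have h2 : (⟨((f.symm x : p.verts) : Fin 20), hmem _ hdeg5⟩ : p.verts) = f.symm x :=
        Subtype.ext rfl
      rw [h2, RelIso.apply_symm_apply]
  -- each part has exactly 10 edges
  have pedges : ∀ p ∈ parts, p.edgeSet.toFinset.card = 10 := by
    intro p hp
    obtain ⟨f⟩ := hiso p hp
    have h1 : p.coe.edgeFinset.card = 10 := f.card_edgeFinset_eq.trans hGedges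
    have h2 : p.edgeSet.ncard = p.coe.edgeSet.ncard := by
      rw [← Subgraph.image_coe_edgeSet_coe p]
      exact Set.ncard_image_of_injective _ (Sym2.map.injective Subtype.val_injective)
    rw [← Set.ncard_eq_toFinset_card', h2, Set.ncard_eq_toFinset_card']
    exact h1
  -- parts is finite
  have hinj : Set.InjOn Subgraph.edgeSet parts := by
    intro p hp q hq h
    have hne : p.edgeSet.Nonempty := by
      rw [Set.nonempty_iff_ne_empty]
      intro h0
      have := pedges p hp
      rw [h0] at this
      simp at this
    obtain ⟨e, he⟩ := hne
    exact (huniq e (p.edgeSet_subset he)).unique ⟨hp, he⟩ ⟨hq, h ▸ he⟩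
  have hfin : parts.Finite := Set.Finite.of_finite_image (Set.toFinite _) hinj
  set P : Finset (⊤ : SimpleGraph (Fin 20)).Subgraph := hfin.toFinset with hP
  have hmemP : ∀ p, p ∈ P ↔ p ∈ parts := fun p => hfin.mem_toFinset
  -- choice function assigning to each edge its part
  have hchoice : ∀ e ∈ (⊤ : SimpleGraph (Fin 20)).edgeSet,
      ∃ p, p ∈ parts ∧ e ∈ p.edgeSet := fun e he => (huniq e he).exists
  choose! F hF1 hF2 using hchoice
  have hFuniq : ∀ e ∈ (⊤ : SimpleGraph (Fin 20)).edgeSet, ∀ p ∈ parts,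
      e ∈ p.edgeSet → p = F e := by
    intro e he p hp hep
    exact (huniq e he).unique ⟨hp, hep⟩ ⟨hF1 e he, hF2 e he⟩
  -- K_20 has 190 edges, hence 19 parts
  have hK : (⊤ : SimpleGraph (Fin 20)).edgeFinset.card = 190 := by
    rw [card_edgeFinset_top_eq_card_choose_two]
    decide
  have hPcard : P.card = 19 := by
    have hmaps : ∀ e ∈ (⊤ : SimpleGraph (Fin 20)).edgeFinset, F e ∈ P := by
      intro e he
      rw [hmemP]
      exact hF1 e (mem_edgeFinset.mp he)
    have hcard := Finset.card_eq_sum_card_fiberwise hmaps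
    rw [hK] at hcard
    have hfiber : ∀ p ∈ P,
        ((⊤ : SimpleGraph (Fin 20)).edgeFinset.filter (fun e => F e = p)).card = 10 := by
      intro p hp
      rw [show ((⊤ : SimpleGraph (Fin 20)).edgeFinset.filter (fun e => F e = p))
          = p.edgeSet.toFinset from ?_, pedges p ((hmemP p).mp hp)]
      ext e
      simp only [Finset.mem_filter, mem_edgeFinset, Set.mem_toFinset]
      constructor
      · rintro ⟨he, rfl⟩
        exact hF2 e he
      · intro he
        have he' : e ∈ (⊤ : SimpleGraph (Fin 20)).edgeSet := p.edgeSet_subset he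
        exact ⟨he', (hFuniq e he' p ((hmemP p).mp hp) he).symm⟩
    rw [Finset.sum_congr rfl hfiber, Finset.sum_const, smul_eq_mul] at hcard
    omega
  -- the degrees of each vertex within the parts sum to 19
  have hdegsum : ∀ v : Fin 20, ∑ p ∈ P, d p v = 19 := by
    intro v
    have hmaps : ∀ w ∈ (⊤ : SimpleGraph (Fin 20)).neighborFinset v,
        F s(v, w) ∈ P := by
      intro w hw
      rw [hmemP]
      exact hF1 _ ((mem_neighborFinset _ _ _).mp hw)
    have hcard := Finset.card_eq_sum_card_fiberwise hmaps
    rw [card_neighborFinset_eq_degree, complete_graph_degree] at hcard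
    simp only [Fintype.card_fin] at hcard
    have heq : ∑ p ∈ P, d p v = ∑ p ∈ P,
        (Finset.filter (fun w => F s(v, w) = p)
          ((⊤ : SimpleGraph (Fin 20)).neighborFinset v)).card := by
      refine Finset.sum_congr rfl (fun p hp => ?_)
      show (p.neighborSet v).ncard = _
      rw [Set.ncard_eq_toFinset_card']
      congr 1
      ext w
      simp only [Finset.mem_filter, mem_neighborFinset, Set.mem_toFinset,
        Subgraph.mem_neighborSet]
      constructor
      · intro hadj
        have he : s(v, w) ∈ p.edgeSet := Subgraph.mem_edgeSet.mpr hadj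
        have he' : s(v, w) ∈ (⊤ : SimpleGraph (Fin 20)).edgeSet := p.edgeSet_subset he
        exact ⟨(⊤ : SimpleGraph (Fin 20)).mem_edgeSet.mp he',
          (hFuniq _ he' p ((hmemP p).mp hp) he).symm⟩
      · rintro ⟨hw, rfl⟩
        exact Subgraph.mem_edgeSet.mp (hF2 _ ((⊤ : SimpleGraph (Fin 20)).mem_edgeSet.mpr hw))
    rw [heq]
    omega
  -- each vertex has degree 5 in exactly two parts
  have ha : ∀ v : Fin 20, (P.filter (fun p => d p v = 5)).card = 2 := by
    intro v
    have hsplit := Finset.sum_filter_add_sum_filter_not P (fun p => d p v = 5)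
      (fun p => d p v)
    have hsplit2 := Finset.sum_filter_add_sum_filter_not
      (P.filter (fun p => ¬ d p v = 5)) (fun p => d p v = 3)
      (fun p => d p v)
    have h5 : ∑ p ∈ P.filter (fun p => d p v = 5), d p v
        = 5 * (P.filter (fun p => d p v = 5)).card := by
      rw [Finset.sum_congr rfl (fun p hp => (Finset.mem_filter.mp hp).2),
        Finset.sum_const, smul_eq_mul, mul_comm]
    have h3 : ∑ p ∈ (P.filter (fun p => ¬ d p v = 5)).filter
          (fun p => d p v = 3), d p v
        = 3 * ((P.filter (fun p => ¬ d p v = 5)).filter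
          (fun p => d p v = 3)).card := by
      rw [Finset.sum_congr rfl (fun p hp => (Finset.mem_filter.mp hp).2),
        Finset.sum_const, smul_eq_mul, mul_comm]
    have h0 : ∑ p ∈ (P.filter (fun p => ¬ d p v = 5)).filter
          (fun p => ¬ d p v = 3), d p v = 0 := by
      apply Finset.sum_eq_zero
      intro p hp
      have h1 := Finset.mem_filter.mp hp
      have h2 := Finset.mem_filter.mp h1.1
      rcases hdeg035 p ((hmemP p).mp h2.1) v with h | h | h
      · exact h
      · exact absurd h h1.2
      · exact absurd h h2.2
    have h19 := hdegsum v
    rw [← hsplit, ← hsplit2, h5, h3, h0] at h19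
    omega
  -- final double counting
  have hcount1 : ∑ v : Fin 20, (P.filter (fun p => d p v = 5)).card = 40 := by
    rw [Finset.sum_congr rfl (fun v _ => ha v), Finset.sum_const, smul_eq_mul]
    simp
  have hcount2 : ∑ v : Fin 20, (P.filter (fun p => d p v = 5)).card = 19 := by
    have h1 : ∀ v : Fin 20, (P.filter (fun p => d p v = 5)).card
        = ∑ p ∈ P, if d p v = 5 then 1 else 0 := by
      intro v
      rw [Finset.card_filter]
    rw [Finset.sum_congr rfl (fun v _ => h1 v), Finset.sum_comm]
    have h2 : ∀ p ∈ P, (∑ v : Fin 20, if d p v = 5 then 1 else 0) = 1 := by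
      intro p hp
      rw [← Finset.card_filter]
      exact pcount p ((hmemP p).mp hp)
    rw [Finset.sum_congr rfl h2, Finset.sum_const, smul_eq_mul, hPcard]
  omega
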